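/- Let (Ω, F, P) be a probability space, d ≥ 1 an integer, and let X = (X^1, …, X^d) and Y = (Y^1, …, Y^d) be ℝ^d-valued random vectors whose laws are absolutely continuous with respect to Lebesgue measure with densities bounded by a constant B > 0. Let K : ℝ → ℝ be bounded and measurable with ∫_ℝ K(u)² du < ∞, let h_1, …, h_d > 0 and x ∈ ℝ^d. Then |Cov(∏_{l=1}^d K_{h_l}(x_l − X^l), ∏_{l=1}^d K_{h_l}(x_l − Y^l))| ≤ B · (∫_ℝ K(u)² du)^d / ∏_{l=1}^d h_l. -/

import Mathlib

open MeasureTheory Finset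

/-- Covariance of two real random variables: `Cov(X, Y) = E[XY] − E[X]E[Y]`. -/
noncomputable def cov {Ω : Type*} [MeasureSpace Ω] (X Y : Ω → ℝ) : ℝ :=
  (∫ ω, X ω * Y ω) - (∫ ω, X ω) * (∫ ω, Y ω)

/-- Rescaled kernel: `K_h(u) = (1/h) K(u/h)`. -/
noncomputable def kh (K : ℝ → ℝ) (h : ℝ) (u : ℝ) : ℝ := (1 / h) * K (u / h)

section Aux

variable {Ω : Type*} [MeasureSpace Ω] [IsProbabilityMeasure (volume : Measure Ω)]

lemma memLp_of_bound' {U : Ω → ℝ} (hU : Measurable U) {c : ℝ} (hc : ∀ ω, |U ω| ≤ c)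
    (p : ENNReal) : MemLp U p volume :=
  (memLp_top_of_bound hU.aestronglyMeasurable c (Filter.Eventually.of_forall fun ω => by
    simpa [Real.norm_eq_abs] using hc ω)).mono_exponent le_top

lemma integrable_of_bound' {U : Ω → ℝ} (hU : Measurable U) {c : ℝ} (hc : ∀ ω, |U ω| ≤ c) :
    Integrable U volume :=
  (memLp_of_bound' hU hc 1).integrable le_rfl

lemma integral_rpow_two_norm_eq {U : Ω → ℝ} :
    ∫ ω, ‖U ω‖ ^ (2 : ℝ) = ∫ ω, U ω ^ 2 := by
  refine integral_congr_ae (Filter.Eventually.of_forall fun ω => ?_)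
  show ‖U ω‖ ^ (2 : ℝ) = U ω ^ 2
  rw [show (2 : ℝ) = ((2 : ℕ) : ℝ) by norm_num, Real.rpow_natCast, Real.norm_eq_abs, sq_abs]

/-- Cauchy–Schwarz bound for the covariance of bounded random variables. -/
lemma abs_cov_le_sqrt {U V : Ω → ℝ} (hU : Measurable U) (hV : Measurable V)
    {cU cV : ℝ} (hcU : ∀ ω, |U ω| ≤ cU) (hcV : ∀ ω, |V ω| ≤ cV) :
    |cov U V| ≤ Real.sqrt (∫ ω, U ω ^ 2) * Real.sqrt (∫ ω, V ω ^ 2) := by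
  have hne : Nonempty Ω := by
    have h0 : (volume : Measure Ω) Set.univ ≠ 0 := by simp
    exact Set.nonempty_iff_univ_nonempty.mpr (nonempty_of_measure_ne_zero h0)
  have hcU0 : 0 ≤ cU := (abs_nonneg _).trans (hcU (Classical.arbitrary _))
  have hcV0 : 0 ≤ cV := (abs_nonneg _).trans (hcV (Classical.arbitrary _))
  set c : ℝ := ∫ ω, U ω with hcdef
  have hUi : Integrable U volume := integrable_of_bound' hU hcU
  have hVi : Integrable V volume := integrable_of_bound' hV hcV
  have hUVi : Integrable (fun ω => U ω * V ω) volume := by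
    refine integrable_of_bound' (hU.mul hV) (c := cU * cV) fun ω => ?_
    rw [abs_mul]
    exact mul_le_mul (hcU ω) (hcV ω) (abs_nonneg _) hcU0
  have hU2i : Integrable (fun ω => U ω ^ 2) volume := by
    refine integrable_of_bound' (hU.pow_const 2) (c := cU ^ 2) fun ω => ?_
    rw [abs_pow]
    exact pow_le_pow_left₀ (abs_nonneg _) (hcU ω) 2
  -- cov U V = ∫ (U - c) V
  have key : cov U V = ∫ ω, (U ω - c) * V ω := by
    have h1 : ∫ ω, (U ω - c) * V ω = (∫ ω, U ω * V ω) - ∫ ω, c * V ω := by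
      simp_rw [sub_mul]
      exact integral_sub hUVi (hVi.const_mul c)
    rw [cov, h1, integral_const_mul]
  -- Cauchy-Schwarz
  have hpq : (2 : ℝ).HolderConjugate 2 := Real.holderConjugate_iff.mpr ⟨one_lt_two, by norm_num⟩
  have h2 : (ENNReal.ofReal (2 : ℝ)) = 2 := by norm_num
  have hUc : MemLp (fun ω => U ω - c) (ENNReal.ofReal (2 : ℝ)) volume := by
    rw [h2]
    refine memLp_of_bound' (hU.sub measurable_const) (c := cU + |c|) (fun ω => ?_) 2
    exact (abs_sub _ _).trans (add_le_add (hcU ω) le_rfl)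
  have hV2 : MemLp V (ENNReal.ofReal (2 : ℝ)) volume := by
    rw [h2]; exact memLp_of_bound' hV hcV 2
  have cs : ∫ ω, ‖U ω - c‖ * ‖V ω‖ ≤
      (∫ ω, ‖U ω - c‖ ^ (2 : ℝ)) ^ (1 / (2:ℝ)) * (∫ ω, ‖V ω‖ ^ (2:ℝ)) ^ (1 / (2:ℝ)) :=
    integral_mul_norm_le_Lp_mul_Lq hpq hUc hV2
  have habs : |cov U V| ≤ ∫ ω, ‖U ω - c‖ * ‖V ω‖ := by
    rw [key]
    calc |∫ ω, (U ω - c) * V ω| ≤ ∫ ω, ‖(U ω - c) * V ω‖ := by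
          simpa [Real.norm_eq_abs] using
            norm_integral_le_integral_norm (fun ω => (U ω - c) * V ω)
      _ = ∫ ω, ‖U ω - c‖ * ‖V ω‖ := by simp [norm_mul]
  -- replace rpow integrals by sqrt of squares
  have e1 : ∫ ω, ‖U ω - c‖ ^ (2:ℝ) = ∫ ω, (U ω - c) ^ 2 :=
    integral_rpow_two_norm_eq (U := fun ω => U ω - c)
  have e2 : ∫ ω, ‖V ω‖ ^ (2:ℝ) = ∫ ω, V ω ^ 2 := integral_rpow_two_norm_eq (U := V)
  -- ∫ (U - c)^2 ≤ ∫ U^2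
  have hsub : ∫ ω, (U ω - c) ^ 2 ≤ ∫ ω, U ω ^ 2 := by
    have expand : (fun ω => (U ω - c) ^ 2)
        = fun ω => (U ω ^ 2 - (2 * c) * U ω) + c ^ 2 := by
      funext ω; ring
    have i1 : Integrable (fun ω => U ω ^ 2 - 2 * c * U ω) volume :=
      hU2i.sub (hUi.const_mul (2 * c))
    have i2 : Integrable (fun ω : Ω => c ^ 2) volume := integrable_const _
    have e3 : ∫ ω, (U ω ^ 2 - 2 * c * U ω) + c ^ 2
        = (∫ ω, U ω ^ 2 - 2 * c * U ω) + ∫ (_ : Ω), c ^ 2 := integral_add i1 i2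
    have e4 : ∫ ω, U ω ^ 2 - 2 * c * U ω
        = (∫ ω, U ω ^ 2) - ∫ ω, 2 * c * U ω := integral_sub hU2i (hUi.const_mul (2 * c))
    rw [expand, e3, e4, integral_const_mul, integral_const]
    simp only [probReal_univ, one_smul, ← hcdef]
    nlinarith [sq_nonneg c]
  have hI2 : 0 ≤ ∫ ω, (U ω - c) ^ 2 := integral_nonneg fun ω => sq_nonneg _
  have hIV : 0 ≤ ∫ ω, V ω ^ 2 := integral_nonneg fun ω => sq_nonneg _
  calc |cov U V| ≤ ∫ ω, ‖U ω - c‖ * ‖V ω‖ := habs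
    _ ≤ (∫ ω, ‖U ω - c‖ ^ (2:ℝ)) ^ (1/(2:ℝ)) * (∫ ω, ‖V ω‖ ^ (2:ℝ)) ^ (1/(2:ℝ)) := cs
    _ = Real.sqrt (∫ ω, (U ω - c) ^ 2) * Real.sqrt (∫ ω, V ω ^ 2) := by
        rw [e1, e2, ← Real.sqrt_eq_rpow, ← Real.sqrt_eq_rpow]
    _ ≤ Real.sqrt (∫ ω, U ω ^ 2) * Real.sqrt (∫ ω, V ω ^ 2) :=
        mul_le_mul_of_nonneg_right (Real.sqrt_le_sqrt hsub) (Real.sqrt_nonneg _)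

/-- Second moment bound for the product kernel estimator. -/
lemma second_moment_bound {d : ℕ} {X : Ω → Fin d → ℝ} (hX : Measurable X)
    {B : ℝ} (hB : 0 ≤ B)
    {pX : (Fin d → ℝ) → ℝ} (hpXm : Measurable pX) (hpX0 : ∀ z, 0 ≤ pX z)
    (hpXB : ∀ z, pX z ≤ B)
    (hlawX : Measure.map X volume = volume.withDensity (fun z => ENNReal.ofReal (pX z)))
    {K : ℝ → ℝ} (hKm : Measurable K) (hK2 : Integrable (fun u => K u ^ 2))
    {h : Fin d → ℝ} (hh : ∀ l, 0 < h l) (x : Fin d → ℝ) :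
    ∫ ω, (∏ l, kh K (h l) (x l - X ω l)) ^ 2
      ≤ B * (∫ u, K u ^ 2) ^ d / ∏ l, h l := by
  set F : (Fin d → ℝ) → ℝ := fun z => ∏ l, (kh K (h l) (x l - z l)) ^ 2 with hF
  have hkm : ∀ l, Measurable (fun u : ℝ => (kh K (h l) (x l - u)) ^ 2) := by
    intro l
    have : Measurable (fun u : ℝ => kh K (h l) (x l - u)) := by
      simp only [kh]
      exact (hKm.comp ((measurable_const.sub measurable_id).div_const _)).const_mul _
    exact this.pow_const 2
  have hFm : Measurable F := by
    apply Finset.measurable_prod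
    intro l _
    exact (hkm l).comp (measurable_pi_apply l)
  have hF0 : ∀ z, 0 ≤ F z := fun z => Finset.prod_nonneg fun l _ => sq_nonneg _
  have hint1 : ∀ l, Integrable (fun u : ℝ => (kh K (h l) (x l - u)) ^ 2) := by
    intro l
    have h0 : (h l) ≠ 0 := (hh l).ne'
    have i1 : Integrable (fun u : ℝ => K (u / h l) ^ 2) := hK2.comp_div h0
    have i2 : Integrable (fun u : ℝ => K ((x l - u) / h l) ^ 2) := i1.comp_sub_left (x l)
    have i3 := i2.const_mul ((1 / h l) ^ 2)
    refine i3.congr (Filter.Eventually.of_forall fun u => ?_)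
    simp [kh, mul_pow]
  have hFint : Integrable F := Integrable.fintype_prod (f := fun l u => (kh K (h l) (x l - u)) ^ 2)
    hint1
  have each : ∀ l, ∫ u, (kh K (h l) (x l - u)) ^ 2 = (∫ u, K u ^ 2) / h l := by
    intro l
    have h0 : (0:ℝ) < h l := hh l
    calc ∫ u, (kh K (h l) (x l - u)) ^ 2
        = ∫ u, (1 / h l) ^ 2 * K ((x l - u) / h l) ^ 2 := by
          refine integral_congr_ae (Filter.Eventually.of_forall fun u => ?_)
          simp [kh, mul_pow]
      _ = (1 / h l) ^ 2 * ∫ u, K ((x l - u) / h l) ^ 2 := integral_const_mul _ _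
      _ = (1 / h l) ^ 2 * ∫ u, K (u / h l) ^ 2 := by
          rw [integral_sub_left_eq_self (fun u => K (u / h l) ^ 2) volume (x l)]
      _ = (1 / h l) ^ 2 * (|h l| • ∫ u, K u ^ 2) := by
          rw [Measure.integral_comp_div (fun u => K u ^ 2) (h l)]
      _ = (∫ u, K u ^ 2) / h l := by
          rw [abs_of_pos h0, smul_eq_mul]
          field_simp
  have hIF : ∫ z, F z = (∫ u, K u ^ 2) ^ d / ∏ l, h l := by
    rw [show (∫ z, F z) = ∏ l, ∫ u, (kh K (h l) (x l - u)) ^ 2 from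
      MeasureTheory.integral_fintype_prod_eq_prod
      (f := fun l u => (kh K (h l) (x l - u)) ^ 2)]
    rw [Finset.prod_congr rfl (fun l _ => each l), Finset.prod_div_distrib,
      Finset.prod_const, Finset.card_univ, Fintype.card_fin]
  have step1 : ∫ ω, (∏ l, kh K (h l) (x l - X ω l)) ^ 2 = ∫ ω, F (X ω) := by
    refine integral_congr_ae (Filter.Eventually.of_forall fun ω => ?_)
    show (∏ l, kh K (h l) (x l - X ω l)) ^ 2 = ∏ l, (kh K (h l) (x l - X ω l)) ^ 2
    rw [← Finset.prod_pow]
  have step2 : ∫ ω, F (X ω) = ∫ z, F z ∂(Measure.map X volume) :=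
    (integral_map hX.aemeasurable hFm.aestronglyMeasurable).symm
  have step3 : ∫ z, F z ∂(Measure.map X volume) = ∫ z, pX z * F z := by
    rw [hlawX]
    have hd : (fun z => ENNReal.ofReal (pX z))
        = fun z => (((pX z).toNNReal : ENNReal)) := rfl
    rw [hd, integral_withDensity_eq_integral_smul hpXm.real_toNNReal F]
    refine integral_congr_ae (Filter.Eventually.of_forall fun z => ?_)
    show (pX z).toNNReal • F z = pX z * F z
    rw [NNReal.smul_def, smul_eq_mul, Real.coe_toNNReal _ (hpX0 z)]
  have step4 : ∫ z, pX z * F z ≤ B * ∫ z, F z := by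
    rw [← integral_const_mul]
    refine integral_mono_of_nonneg (Filter.Eventually.of_forall fun z =>
      mul_nonneg (hpX0 z) (hF0 z)) (hFint.const_mul B)
      (Filter.Eventually.of_forall fun z => ?_)
    exact mul_le_mul_of_nonneg_right (hpXB z) (hF0 z)
  calc ∫ ω, (∏ l, kh K (h l) (x l - X ω l)) ^ 2
      = ∫ z, pX z * F z := by rw [step1, step2, step3]
    _ ≤ B * ∫ z, F z := step4
    _ = B * (∫ u, K u ^ 2) ^ d / ∏ l, h l := by rw [hIF, mul_div_assoc]

end Aux

/-- If the laws of the random vectors `X, Y : Ω → ℝ^d` have densities (w.r.t. Lebesgue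
measure) bounded by `B`, `K` is bounded measurable and square integrable, then
`|Cov(∏ K_{h_l}(x_l − X^l), ∏ K_{h_l}(x_l − Y^l))| ≤ B (∫ K²)^d / ∏ h_l`. -/
theorem abs_cov_kernel_le {Ω : Type*} [MeasureSpace Ω]
    [IsProbabilityMeasure (volume : Measure Ω)]
    (d : ℕ) (hd : 1 ≤ d) (X Y : Ω → (Fin d → ℝ))
    (hX : Measurable X) (hY : Measurable Y)
    (B : ℝ) (hB : 0 < B)
    (pX pY : (Fin d → ℝ) → ℝ) (hpXm : Measurable pX) (hpYm : Measurable pY)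
    (hpX0 : ∀ z, 0 ≤ pX z) (hpY0 : ∀ z, 0 ≤ pY z)
    (hpXB : ∀ z, pX z ≤ B) (hpYB : ∀ z, pY z ≤ B)
    (hlawX : Measure.map X volume = volume.withDensity (fun z => ENNReal.ofReal (pX z)))
    (hlawY : Measure.map Y volume = volume.withDensity (fun z => ENNReal.ofReal (pY z)))
    (K : ℝ → ℝ) (hKm : Measurable K) (hKb : ∃ M, ∀ u, |K u| ≤ M)
    (hK2 : Integrable (fun u => K u ^ 2))
    (h : Fin d → ℝ) (hh : ∀ l, 0 < h l) (x : Fin d → ℝ) :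
    |cov (fun ω => ∏ l, kh K (h l) (x l - X ω l))
        (fun ω => ∏ l, kh K (h l) (x l - Y ω l))|
      ≤ B * (∫ u, K u ^ 2) ^ d / ∏ l, h l := by
  obtain ⟨M, hM⟩ := hKb
  have hM0 : 0 ≤ M := (abs_nonneg _).trans (hM 0)
  -- measurability and boundedness of the product kernels
  have hmeas : ∀ (Z : Ω → Fin d → ℝ), Measurable Z →
      Measurable (fun ω => ∏ l, kh K (h l) (x l - Z ω l)) := by
    intro Z hZ
    apply Finset.measurable_prod
    intro l _
    simp only [kh]
    exact (hKm.comp ((measurable_const.sub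
      ((measurable_pi_apply l).comp hZ)).div_const _)).const_mul _
  have hbound : ∀ (Z : Ω → Fin d → ℝ) (ω : Ω),
      |∏ l, kh K (h l) (x l - Z ω l)| ≤ ∏ l, M / h l := by
    intro Z ω
    rw [Finset.abs_prod]
    refine Finset.prod_le_prod (fun l _ => abs_nonneg _) fun l _ => ?_
    rw [kh, abs_mul]
    have h1 : |1 / h l| = 1 / h l := abs_of_pos (one_div_pos.mpr (hh l))
    rw [h1]
    calc (1 / h l) * |K ((x l - Z ω l) / h l)| ≤ (1 / h l) * M :=
          mul_le_mul_of_nonneg_left (hM _) (one_div_pos.mpr (hh l)).le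
      _ = M / h l := by ring
  have hIK : 0 ≤ ∫ u, K u ^ 2 := integral_nonneg fun u => sq_nonneg _
  have hP : 0 < ∏ l, h l := Finset.prod_pos fun l _ => hh l
  have hC : 0 ≤ B * (∫ u, K u ^ 2) ^ d / ∏ l, h l :=
    div_nonneg (mul_nonneg hB.le (pow_nonneg hIK d)) hP.le
  have hmX := second_moment_bound hX hB.le hpXm hpX0 hpXB hlawX hKm hK2 hh x
  have hmY := second_moment_bound hY hB.le hpYm hpY0 hpYB hlawY hKm hK2 hh x
  calc |cov (fun ω => ∏ l, kh K (h l) (x l - X ω l))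
        (fun ω => ∏ l, kh K (h l) (x l - Y ω l))|
      ≤ Real.sqrt (∫ ω, (∏ l, kh K (h l) (x l - X ω l)) ^ 2)
        * Real.sqrt (∫ ω, (∏ l, kh K (h l) (x l - Y ω l)) ^ 2) :=
        abs_cov_le_sqrt (hmeas X hX) (hmeas Y hY) (hbound X) (hbound Y)
    _ ≤ Real.sqrt (B * (∫ u, K u ^ 2) ^ d / ∏ l, h l)
        * Real.sqrt (B * (∫ u, K u ^ 2) ^ d / ∏ l, h l) :=
        mul_le_mul (Real.sqrt_le_sqrt hmX) (Real.sqrt_le_sqrt hmY)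
          (Real.sqrt_nonneg _) (Real.sqrt_nonneg _)
    _ = B * (∫ u, K u ^ 2) ^ d / ∏ l, h l := Real.mul_self_sqrt hC
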